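/- Let f : ℝ^d → ℝ be continuously differentiable with a nonempty set S of global minimizers, let ∅ ≠ S̃ ⊆ S, let P(·; S̃) : ℝ^d → ℝ be nonnegative, and suppose there exist constants c₁ > 0, c₂ ≥ 0 such that ⟨∇f(x), x − proj_{S̃}(x)⟩ ≥ c₁ P(x; S̃) − c₂ for all x ∈ ℝ^d. Let (x^k) be iterates x^{k+1} = x^k − γ^k ∇f(x^k) with stepsizes satisfying 0 < γ^k ≤ (2−α)(⟨∇f(x^k), x^k − x^k_p⟩ + c₂ + β^k)/‖∇f(x^k)‖² for all k, where 0 < α < 2, β^k > 0, x^k_p := proj_{S̃}(x^k). Then for every K ≥ 0: min_{0≤k≤K} P(x^k; S̃) ≤ (Σ_{k=0}^{K} γ^k P(x^k; S̃))/(Σ_{k=0}^{K} γ^k) ≤ ‖x^0 − x^0_p‖²/(α c₁ Σ_{k=0}^{K} γ^k) + C^K, where C^K := (Σ_{k=0}^{K} (2−α) β^k γ^k)/(α c₁ Σ_{k=0}^{K} γ^k) + 2c₂/(α c₁). -/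

import Mathlib

open scoped RealInnerProductSpace

/-- Theorem 1 (averaged bound) of "A Novel Unified Parametric Assumption for Nonconvex
Optimization": under the unified parametric assumption, the minimum (and the stepsize-weighted
average) of the progress function along the gradient descent trajectory is bounded as stated. -/
theorem min_progress_bound_deterministic
    {d : ℕ} (f : EuclideanSpace ℝ (Fin d) → ℝ)
    (hf : ContDiff ℝ 1 f)
    (S St : Set (EuclideanSpace ℝ (Fin d)))
    (hSne : S.Nonempty)
    (hSmin : ∀ s ∈ S, ∀ y, f s ≤ f y)
    (hStS : St ⊆ S) (hStne : St.Nonempty)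
    (proj : EuclideanSpace ℝ (Fin d) → EuclideanSpace ℝ (Fin d))
    (hproj : ∀ y, proj y ∈ St ∧ ∀ z ∈ St, ‖y - proj y‖ ≤ ‖y - z‖)
    (P : EuclideanSpace ℝ (Fin d) → ℝ) (hP : ∀ y, 0 ≤ P y)
    (c₁ c₂ : ℝ) (hc₁ : 0 < c₁) (hc₂ : 0 ≤ c₂)
    (hass : ∀ y, c₁ * P y - c₂ ≤ ⟪gradient f y, y - proj y⟫)
    (α : ℝ) (hα₁ : 0 < α) (hα₂ : α < 2)
    (β : ℕ → ℝ) (hβ : ∀ k, 0 < β k)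
    (x : ℕ → EuclideanSpace ℝ (Fin d)) (γ : ℕ → ℝ)
    (hupd : ∀ k, x (k + 1) = x k - γ k • gradient f (x k))
    (hγ : ∀ k, 0 < γ k ∧
      γ k ≤ (2 - α) * (⟪gradient f (x k), x k - proj (x k)⟫ + c₂ + β k) /
        ‖gradient f (x k)‖ ^ 2)
    (K : ℕ) :
    (Finset.range (K + 1)).inf' Finset.nonempty_range_add_one (fun k => P (x k)) ≤
        (∑ k ∈ Finset.range (K + 1), γ k * P (x k)) / (∑ k ∈ Finset.range (K + 1), γ k)
    ∧ (∑ k ∈ Finset.range (K + 1), γ k * P (x k)) / (∑ k ∈ Finset.range (K + 1), γ k) ≤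
        ‖x 0 - proj (x 0)‖ ^ 2 / (α * c₁ * ∑ k ∈ Finset.range (K + 1), γ k)
        + ((∑ k ∈ Finset.range (K + 1), (2 - α) * β k * γ k) /
            (α * c₁ * ∑ k ∈ Finset.range (K + 1), γ k)
          + 2 * c₂ / (α * c₁)) := by
  -- notation
  set a : ℕ → ℝ := fun k => ‖x k - proj (x k)‖ ^ 2 with ha
  have hT : 0 < ∑ k ∈ Finset.range (K + 1), γ k :=
    Finset.sum_pos (fun k _ => (hγ k).1) Finset.nonempty_range_add_one
  -- per-step descent inequality
  have key : ∀ k, α * c₁ * (γ k * P (x k)) ≤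
      a k - a (k + 1) + ((2 - α) * β k * γ k + 2 * c₂ * γ k) := by
    intro k
    have hγk := (hγ k).1
    have hgne : gradient f (x k) ≠ 0 := by
      intro h
      have h2 := (hγ k).2
      rw [h] at h2
      simp at h2
      linarith
    have hn : (0:ℝ) < ‖gradient f (x k)‖ ^ 2 :=
      pow_pos (norm_pos_iff.2 hgne) 2
    have h4 : γ k * ‖gradient f (x k)‖ ^ 2 ≤
        (2 - α) * (⟪gradient f (x k), x k - proj (x k)⟫ + c₂ + β k) :=
      (le_div_iff₀ hn).1 (hγ k).2
    have h1 : ‖x (k + 1) - proj (x (k + 1))‖ ≤ ‖x (k + 1) - proj (x k)‖ :=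
      (hproj (x (k + 1))).2 _ (hproj (x k)).1
    have h1sq : a (k + 1) ≤ ‖x (k + 1) - proj (x k)‖ ^ 2 :=
      pow_le_pow_left₀ (norm_nonneg _) h1 2
    have h2 : x (k + 1) - proj (x k) =
        (x k - proj (x k)) - γ k • gradient f (x k) := by
      rw [hupd k]; abel
    have h3 : ‖x (k + 1) - proj (x k)‖ ^ 2 =
        a k - 2 * (γ k * ⟪gradient f (x k), x k - proj (x k)⟫) +
          γ k ^ 2 * ‖gradient f (x k)‖ ^ 2 := by
      rw [h2, norm_sub_sq_real, real_inner_smul_right, norm_smul,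
        real_inner_comm]
      simp only [ha, Real.norm_eq_abs, mul_pow, sq_abs]
    have h5 := hass (x k)
    have hsq : γ k * (γ k * ‖gradient f (x k)‖ ^ 2) ≤
        γ k * ((2 - α) * (⟪gradient f (x k), x k - proj (x k)⟫ + c₂ + β k)) :=
      mul_le_mul_of_nonneg_left h4 hγk.le
    nlinarith [mul_le_mul_of_nonneg_left h5 (mul_pos hα₁ hγk).le]
  -- summing
  have hsum : α * c₁ * ∑ k ∈ Finset.range (K + 1), γ k * P (x k) ≤
      a 0 + ((∑ k ∈ Finset.range (K + 1), (2 - α) * β k * γ k) +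
        2 * c₂ * ∑ k ∈ Finset.range (K + 1), γ k) := by
    have h := Finset.sum_le_sum (fun k (_ : k ∈ Finset.range (K + 1)) => key k)
    rw [Finset.sum_add_distrib, Finset.sum_range_sub' a, Finset.sum_add_distrib] at h
    have ha1 : 0 ≤ a (K + 1) := by positivity
    calc α * c₁ * ∑ k ∈ Finset.range (K + 1), γ k * P (x k)
        = ∑ k ∈ Finset.range (K + 1), α * c₁ * (γ k * P (x k)) := by
          rw [Finset.mul_sum]
      _ ≤ _ := h
      _ ≤ _ := by rw [Finset.mul_sum]; linarith
  constructor
  · -- min ≤ average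
    rw [le_div_iff₀ hT]
    set m := (Finset.range (K + 1)).inf' Finset.nonempty_range_add_one (fun k => P (x k)) with hm
    calc m * ∑ k ∈ Finset.range (K + 1), γ k
        = ∑ k ∈ Finset.range (K + 1), γ k * m := by rw [Finset.mul_sum]; simp [mul_comm]
      _ ≤ ∑ k ∈ Finset.range (K + 1), γ k * P (x k) :=
          Finset.sum_le_sum (fun k hk =>
            mul_le_mul_of_nonneg_left (Finset.inf'_le _ hk) (hγ k).1.le)
  · -- average ≤ bound
    set T := ∑ k ∈ Finset.range (K + 1), γ k with hTdef
    set B := ∑ k ∈ Finset.range (K + 1), (2 - α) * β k * γ k with hB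
    have hD : (0:ℝ) < α * c₁ := mul_pos hα₁ hc₁
    have hrhs : ‖x 0 - proj (x 0)‖ ^ 2 / (α * c₁ * T) + (B / (α * c₁ * T) + 2 * c₂ / (α * c₁))
        = (a 0 + (B + 2 * c₂ * T)) / (α * c₁ * T) := by
      field_simp
      ring
    rw [hrhs, div_le_div_iff₀ hT (by positivity)]
    nlinarith [hsum, hT, mul_le_mul_of_nonneg_right hsum hT.le]
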